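/- Let q ≡ 1 (mod 4) be an odd prime power and let a, b ∈ F_q be nonzero with ba⁻¹ a nonsquare in F_q. Then the point ⟨(a,b,0)⟩ is H-free. -/

import Mathlib

noncomputable section

/-- Three points of PG(2,q) are collinear if they have linearly dependent representatives. -/
def Coll3 {F : Type*} [Field F] (P Q R : Projectivization F (Fin 3 → F)) : Prop :=
  ¬ LinearIndependent F ![P.rep, Q.rep, R.rep]

/-- A point is `S`-covered if it lies on a line through two distinct points of `S`. -/
def PGCovered {F : Type*} [Field F] (S : Set (Projectivization F (Fin 3 → F)))
    (P : Projectivization F (Fin 3 → F)) : Prop :=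
  ∃ Q ∈ S, ∃ R ∈ S, Q ≠ R ∧ Coll3 P Q R

/-- A point not in `S` is `S`-free if it is not `S`-covered. -/
def PGFree {F : Type*} [Field F] (S : Set (Projectivization F (Fin 3 → F)))
    (P : Projectivization F (Fin 3 → F)) : Prop :=
  P ∉ S ∧ ¬ PGCovered S P

lemma vec_ne_zero {F : Type*} [Field F] (v : Fin 3 → F) (i : Fin 3) (h : v i ≠ 0) : v ≠ 0 :=
  fun hv => h (by simp [hv])

/-- The set `H = {⟨(1,s⁴,s²)⟩ : s ∈ F}` of points of PG(2,q). -/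
def HSet (F : Type*) [Field F] : Set (Projectivization F (Fin 3 → F)) :=
  {P | ∃ s : F, P = Projectivization.mk F ![1, s ^ 4, s ^ 2] (vec_ne_zero _ 0 (by simp))}

/-- The conic `C : XY = Z²` in PG(2,q).  (Membership does not depend on the choice of
representative since the equation is homogeneous.) -/
def conicC (F : Type*) [Field F] : Set (Projectivization F (Fin 3 → F)) :=
  {P | P.rep 0 * P.rep 1 = P.rep 2 ^ 2}

/-- An arc: a set of points no three of which are collinear. -/
def IsPGArc {F : Type*} [Field F] (S : Set (Projectivization F (Fin 3 → F))) : Prop :=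
  ∀ P ∈ S, ∀ Q ∈ S, ∀ R ∈ S, P ≠ Q → P ≠ R → Q ≠ R → ¬ Coll3 P Q R

/-- A complete arc: an arc which cannot be extended to a larger arc. -/
def IsCompletePGArc {F : Type*} [Field F] (S : Set (Projectivization F (Fin 3 → F))) : Prop :=
  IsPGArc S ∧ ∀ P ∉ S, ¬ IsPGArc (insert P S)

-- aux: linear independence of reps via linear independence of the vectors
lemma li_reps {F : Type*} [Field F] (u v w : Fin 3 → F) (hu : u ≠ 0) (hv : v ≠ 0) (hw : w ≠ 0)
    (h : LinearIndependent F ![u, v, w]) :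
    LinearIndependent F ![(Projectivization.mk F u hu).rep,
      (Projectivization.mk F v hv).rep, (Projectivization.mk F w hw).rep] := by
  obtain ⟨cu, hcu⟩ := Projectivization.exists_smul_eq_mk_rep F u hu
  obtain ⟨cv, hcv⟩ := Projectivization.exists_smul_eq_mk_rep F v hv
  obtain ⟨cw, hcw⟩ := Projectivization.exists_smul_eq_mk_rep F w hw
  have := h.units_smul ![cu, cv, cw]
  convert this using 1
  funext i
  fin_cases i <;> simp [← hcu, ← hcv, ← hcw]

/-- for `q ≡ 1 (mod 4)`, if `b·a⁻¹` is a nonsquare then `⟨(a,b,0)⟩` is `H`-free. -/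
theorem stmt9 (F : Type*) [Field F] [Fintype F] (q : ℕ) (hcard : Fintype.card F = q)
    (hodd : Odd q) (hq1 : q % 4 = 1) (a b : F) (ha : a ≠ 0) (hb : b ≠ 0)
    (hnsq : ¬ IsSquare (b * a⁻¹)) :
    PGFree (HSet F)
      (Projectivization.mk F ![a, b, 0] (vec_ne_zero _ 0 (by simpa using ha))) := by
  have hneg1 : IsSquare (-1 : F) := by
    rw [FiniteField.isSquare_neg_one_iff, hcard, hq1]; norm_num
  constructor
  · rintro ⟨s, hs⟩
    rw [Projectivization.mk_eq_mk_iff] at hs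
    obtain ⟨c, hc⟩ := hs
    have h2 : (c : F) * s ^ 2 = 0 := by
      have := congrFun hc 2
      simpa [Units.smul_def, eq_comm] using this
    have h1 : b = (c : F) * s ^ 4 := by
      have := congrFun hc 1
      simpa [Units.smul_def, eq_comm] using this
    have hs0 : s = 0 := by
      rcases mul_eq_zero.1 h2 with h | h
      · exact absurd h c.ne_zero
      · exact pow_eq_zero_iff (by norm_num) |>.1 h
    rw [hs0] at h1; simp at h1; exact hb h1
  · rintro ⟨Q, ⟨s, rfl⟩, R, ⟨t, rfl⟩, hQR, hcoll⟩
    -- s² ≠ t²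
    have hst : s ^ 2 ≠ t ^ 2 := by
      intro h
      apply hQR
      have h4 : s ^ 4 = t ^ 4 := by
        have : (s ^ 2) ^ 2 = (t ^ 2) ^ 2 := by rw [h]
        simpa [← pow_mul] using this
      congr 1
      funext i; fin_cases i <;> simp [h, h4]
    apply hcoll
    apply li_reps
    rw [show (![![a, b, 0], ![1, s ^ 4, s ^ 2], ![1, t ^ 4, t ^ 2]] : Fin 3 → Fin 3 → F)
        = Matrix.row (Matrix.of ![![a, b, 0], ![1, s ^ 4, s ^ 2], ![1, t ^ 4, t ^ 2]]) from rfl,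
      Matrix.linearIndependent_rows_iff_isUnit]
    rw [Matrix.isUnit_iff_isUnit_det, isUnit_iff_ne_zero]
    have hdet : (Matrix.of ![![a, b, 0], ![1, s ^ 4, s ^ 2], ![1, t ^ 4, t ^ 2]]).det
        = (s ^ 2 - t ^ 2) * (a * s ^ 2 * t ^ 2 + b) := by
      rw [Matrix.det_fin_three]
      simp [Matrix.vecHead, Matrix.vecTail]
      ring
    rw [hdet]
    refine mul_ne_zero (sub_ne_zero.2 hst) ?_
    intro h0
    apply hnsq
    have hbv : b = -(a * s ^ 2 * t ^ 2) := by linear_combination h0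
    have hb' : b * a⁻¹ = -1 * (s * t) ^ 2 := by
      rw [hbv]; field_simp
    rw [hb']
    exact hneg1.mul ⟨s * t, sq (s * t)⟩
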